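/- Fix L ≥ 1 and S ≥ 1. Among all characteristic polynomials x^L − c_1 x^{L-1} − ... − c_L with nonnegative integers c_i, c_1 ≥ 1, c_L ≥ 1, and c_1 + ... + c_L = S + 1, the polynomial x^L − x^{L-1} − S has the smallest positive root. -/

import Mathlib

theorem min_principal_root_fixed_sum (L S : ℕ) (hL : 1 ≤ L) (hS : 1 ≤ S) (c : ℕ → ℕ)
    (hc1 : 1 ≤ c 1) (hcL : 1 ≤ c L)
    (hsum : ∑ i ∈ Finset.Icc 1 L, c i = S + 1)
    (r r0 : ℝ) (hr : 0 < r)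
    (hroot : r ^ L = ∑ i ∈ Finset.Icc 1 L, (c i : ℝ) * r ^ (L - i))
    (hr0 : 0 < r0) (hroot0 : r0 ^ L = r0 ^ (L - 1) + S) :
    r0 ≤ r := by
  have hLmem : L ∈ Finset.Icc 1 L := Finset.mem_Icc.mpr ⟨hL, le_refl L⟩
  have h1mem : 1 ∈ Finset.Icc 1 L := Finset.mem_Icc.mpr ⟨le_refl 1, hL⟩
  have hnonneg : ∀ i ∈ Finset.Icc 1 L, (0:ℝ) ≤ (c i : ℝ) * r ^ (L - i) := by
    intro i _
    positivity
  -- r ≥ 1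
  have h1le : (1:ℝ) ≤ r ^ L := by
    have := Finset.single_le_sum hnonneg hLmem
    rw [Nat.sub_self, pow_zero, mul_one] at this
    rw [hroot]
    exact le_trans (by exact_mod_cast hcL) this
  have hr1 : (1:ℝ) ≤ r := by
    by_contra h
    push_neg at h
    have := pow_lt_one₀ hr.le h (by omega : L ≠ 0)
    linarith
  -- split off i = 1
  have hsplit : (c 1 : ℝ) * r ^ (L - 1) +
      ∑ i ∈ (Finset.Icc 1 L).erase 1, (c i : ℝ) * r ^ (L - i)
      = ∑ i ∈ Finset.Icc 1 L, (c i : ℝ) * r ^ (L - i) :=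
    Finset.add_sum_erase _ (fun i => (c i : ℝ) * r ^ (L - i)) h1mem
  have hrest : (∑ i ∈ (Finset.Icc 1 L).erase 1, (c i : ℝ))
      ≤ ∑ i ∈ (Finset.Icc 1 L).erase 1, (c i : ℝ) * r ^ (L - i) := by
    apply Finset.sum_le_sum
    intro i _
    have : (1:ℝ) ≤ r ^ (L - i) := one_le_pow₀ hr1
    nlinarith [Nat.cast_nonneg (α := ℝ) (c i)]
  have hrestsum : (c 1 : ℝ) + ∑ i ∈ (Finset.Icc 1 L).erase 1, (c i : ℝ) = (S:ℝ) + 1 := by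
    rw [Finset.add_sum_erase _ (fun i => (c i : ℝ)) h1mem]
    exact_mod_cast hsum
  have hc1' : (1:ℝ) ≤ (c 1 : ℝ) := by exact_mod_cast hc1
  have hpow1 : (1:ℝ) ≤ r ^ (L - 1) := one_le_pow₀ hr1
  -- key inequality: r^L ≥ r^(L-1) + S
  have hkey : r ^ (L - 1) + (S:ℝ) ≤ r ^ L := by
    rw [hroot, ← hsplit]
    nlinarith
  -- rewrite pow L as pow (L-1) * x
  have hLeq : L - 1 + 1 = L := by omega
  have hrL : r ^ L = r ^ (L - 1) * r := by
    conv_lhs => rw [← hLeq, pow_succ]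
  have hr0L : r0 ^ L = r0 ^ (L - 1) * r0 := by
    conv_lhs => rw [← hLeq, pow_succ]
  rw [hrL] at hkey
  rw [hr0L] at hroot0
  have hr0pow : (0:ℝ) < r0 ^ (L - 1) := pow_pos hr0 _
  have hS1 : (1:ℝ) ≤ (S:ℝ) := by exact_mod_cast hS
  have hr01 : (1:ℝ) < r0 := by nlinarith
  by_contra h
  push_neg at h
  have hplt : r ^ (L - 1) ≤ r0 ^ (L - 1) := pow_le_pow_left₀ hr.le h.le _
  nlinarith
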